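/- On the three-dimensional cubical subcomplex C3_N (the span of basis triples with no infinitesimal component), the boundary satisfies the Leibniz product rule: for all basis triples u, v with no infinitesimal component, ∂₃(μ₃(u, v)) = μ₃(∂₃ u, v) + (−1)^(c(u)) μ₃(u, ∂₃ v). -/

import Mathlib

/-- Basis elements of the one-dimensional enlarged complex of period `N`:
points `P a`, elemental sticks `S a` (the interval `[a, a+1]`), and
infinitesimal sticks `I a`. -/
inductive B (N : ℕ) : Type where
  | P : ZMod N → B N
  | S : ZMod N → B N
  | I : ZMod N → B N
  deriving DecidableEq

/-- The enlarged one-dimensional chain complex: the free ℚ-vector space on `B N`. -/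
abbrev EC (N : ℕ) : Type := B N →₀ ℚ

namespace B

variable {N : ℕ}

/-- Codimension: 1 for points, 0 for sticks and infinitesimal sticks. -/
def cod : B N → ℕ
  | P _ => 1
  | _ => 0

/-- Basis element viewed in `EC N`. -/
noncomputable def e (u : B N) : EC N := Finsupp.single u 1

/-- The transverse intersection product on basis elements. -/
noncomputable def muB : B N → B N → EC N
  | P _, P _ => 0
  | P a, S b => if b = a ∨ b = a - 1 then Finsupp.single (P a) (1/2) else 0
  | S b, P a => if b = a ∨ b = a - 1 then Finsupp.single (P a) (1/2) else 0
  | P a, I b => if b = a then Finsupp.single (P a) (1/4) else 0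
  | I b, P a => if b = a then Finsupp.single (P a) (1/4) else 0
  | S a, S b =>
      if b = a then
        Finsupp.single (I a) (-1) + Finsupp.single (S a) 1 + Finsupp.single (I (a+1)) (-1)
      else if b = a + 1 then Finsupp.single (I (a+1)) 1
      else if b = a - 1 then Finsupp.single (I a) 1
      else 0
  | S a, I b => if b = a ∨ b = a + 1 then Finsupp.single (I b) (1/2) else 0
  | I b, S a => if b = a ∨ b = a + 1 then Finsupp.single (I b) (1/2) else 0
  | I a, I b => if b = a then Finsupp.single (I a) (1/4) else 0

/-- Boundary on basis elements: `∂ (S a) = P (a+1) - P a`, zero otherwise. -/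
noncomputable def bdB : B N → EC N
  | S a => Finsupp.single (P (a+1)) 1 - Finsupp.single (P a) 1
  | _ => 0

/-- Augmentation on basis elements. -/
def epsB : B N → ℚ
  | P _ => 1
  | _ => 0

end B

/-- Bilinear extension of the basis product to `EC N`. -/
noncomputable def mu {N : ℕ} (x y : EC N) : EC N :=
  x.sum fun u cu => y.sum fun v cv => (cu * cv) • B.muB u v

/-- Linear extension of the boundary to `EC N`. -/
noncomputable def bd {N : ℕ} (x : EC N) : EC N := x.sum fun u cu => cu • B.bdB u

/-- Augmentation `ε : EC N → ℚ`. -/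
noncomputable def eps {N : ℕ} (x : EC N) : ℚ := x.sum fun u cu => cu * B.epsB u

/-- The augmentation pairing `⟨x, y⟩ = ε (μ x y)`. -/
noncomputable def pair {N : ℕ} (x y : EC N) : ℚ := eps (mu x y)

/-- The subcomplex `C_N` spanned by points and elemental sticks. -/
noncomputable def Csub (N : ℕ) : Submodule ℚ (EC N) :=
  Submodule.span ℚ
    (Set.range (fun a : ZMod N => Finsupp.single (B.P a) (1 : ℚ)) ∪
     Set.range (fun a : ZMod N => Finsupp.single (B.S a) (1 : ℚ)))

/-- Basis triples for the three-dimensional complex. -/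
abbrev B3 (N : ℕ) : Type := B N × B N × B N

/-- The enlarged three-dimensional chain complex: free ℚ-vector space on `B3 N`. -/
abbrev E3 (N : ℕ) : Type := B3 N →₀ ℚ

/-- Codimension of a basis triple. -/
def cod3 {N : ℕ} (u : B3 N) : ℕ := u.1.cod + u.2.1.cod + u.2.2.cod

/-- Basis triple viewed in `E3 N`. -/
noncomputable def e3 {N : ℕ} (u : B3 N) : E3 N := Finsupp.single u 1

/-- Trilinear map `EC N → EC N → EC N → E3 N`, `x ⊗ y ⊗ z`. -/
noncomputable def t3 {N : ℕ} (x y z : EC N) : E3 N :=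
  x.sum fun u₁ c₁ => y.sum fun u₂ c₂ => z.sum fun u₃ c₃ =>
    Finsupp.single (u₁, u₂, u₃) (c₁ * c₂ * c₃)

/-- The three-dimensional intersection product on basis triples, with Koszul sign. -/
noncomputable def mu3B {N : ℕ} (u v : B3 N) : E3 N :=
  ((-1 : ℚ) ^ (u.2.1.cod * v.1.cod + u.2.2.cod * v.1.cod + u.2.2.cod * v.2.1.cod)) •
    t3 (B.muB u.1 v.1) (B.muB u.2.1 v.2.1) (B.muB u.2.2 v.2.2)

/-- Bilinear extension of the three-dimensional product to `E3 N`. -/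
noncomputable def mu3 {N : ℕ} (x y : E3 N) : E3 N :=
  x.sum fun u cu => y.sum fun v cv => (cu * cv) • mu3B u v

/-- The three-dimensional boundary on basis triples. -/
noncomputable def bd3B {N : ℕ} (u : B3 N) : E3 N :=
  t3 (B.bdB u.1) (B.e u.2.1) (B.e u.2.2)
    + ((-1 : ℚ) ^ u.1.cod) • t3 (B.e u.1) (B.bdB u.2.1) (B.e u.2.2)
    + ((-1 : ℚ) ^ (u.1.cod + u.2.1.cod)) • t3 (B.e u.1) (B.e u.2.1) (B.bdB u.2.2)

/-- Linear extension of the three-dimensional boundary to `E3 N`. -/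
noncomputable def bd3 {N : ℕ} (x : E3 N) : E3 N := x.sum fun u cu => cu • bd3B u

/-- The three-dimensional augmentation `ε₃`. -/
noncomputable def eps3 {N : ℕ} (x : E3 N) : ℚ :=
  x.sum fun u cu => cu * (B.epsB u.1 * B.epsB u.2.1 * B.epsB u.2.2)

/-- The three-dimensional augmentation pairing. -/
noncomputable def pair3 {N : ℕ} (x y : E3 N) : ℚ := eps3 (mu3 x y)

/-- Is a basis element an infinitesimal stick? -/
def isI {N : ℕ} : B N → Bool
  | .I _ => true
  | _ => false

/-- Is a basis element a point? -/
def isP {N : ℕ} : B N → Bool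
  | .P _ => true
  | _ => false

/-- Number of infinitesimal components of a basis triple. -/
def nI {N : ℕ} (u : B3 N) : ℕ :=
  (if isI u.1 then 1 else 0) + (if isI u.2.1 then 1 else 0) + (if isI u.2.2 then 1 else 0)

/-- Number of point components of a basis triple. -/
def nP {N : ℕ} (u : B3 N) : ℕ :=
  (if isP u.1 then 1 else 0) + (if isP u.2.1 then 1 else 0) + (if isP u.2.2 then 1 else 0)

/-- Membership of a basis triple in the generating set of `FC_N`: either no infinitesimal
component and at least one point component, or exactly one infinitesimal component and
two point components. -/
def inFC {N : ℕ} (u : B3 N) : Prop := (nI u = 0 ∧ 1 ≤ nP u) ∨ (nI u = 1 ∧ nP u = 2)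

/-- The subcomplex `FC_N` of `E3 N`. -/
noncomputable def FCsub (N : ℕ) : Submodule ℚ (E3 N) :=
  Submodule.span ℚ {x : E3 N | ∃ u : B3 N, inFC u ∧ x = e3 u}

/-- A basis triple has no infinitesimal component. -/
def noInf {N : ℕ} (u : B3 N) : Prop := nI u = 0

/-- The three-dimensional cubical subcomplex `C3_N` of `E3 N`. -/
noncomputable def C3sub (N : ℕ) : Submodule ℚ (E3 N) :=
  Submodule.span ℚ {x : E3 N | ∃ u : B3 N, noInf u ∧ x = e3 u}
namespace LeibnizAux
variable {N : ℕ}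

noncomputable def bdL : EC N →ₗ[ℚ] EC N :=
  Finsupp.lsum ℚ fun u => LinearMap.toSpanSingleton ℚ (EC N) (B.bdB u)

lemma bd_eq (x : EC N) : bd x = bdL x := by
  rw [bd, bdL, Finsupp.lsum_apply]
  exact Finsupp.sum_congr fun u _ => by simp

noncomputable def muL : EC N →ₗ[ℚ] EC N →ₗ[ℚ] EC N :=
  Finsupp.lsum ℚ fun u => LinearMap.toSpanSingleton ℚ (EC N →ₗ[ℚ] EC N)
    (Finsupp.lsum ℚ fun v => LinearMap.toSpanSingleton ℚ (EC N) (B.muB u v))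

lemma mu_eq (x y : EC N) : mu x y = muL x y := by
  rw [mu, muL, Finsupp.lsum_apply, Finsupp.sum, Finsupp.sum, LinearMap.sum_apply]
  refine Finset.sum_congr rfl fun u _ => ?_
  rw [LinearMap.toSpanSingleton_apply, LinearMap.smul_apply, Finsupp.lsum_apply,
    Finsupp.smul_sum]
  exact Finsupp.sum_congr fun v _ => by simp [smul_smul]


noncomputable def t3L : EC N →ₗ[ℚ] EC N →ₗ[ℚ] EC N →ₗ[ℚ] E3 N :=
  Finsupp.lsum ℚ fun u₁ => LinearMap.toSpanSingleton ℚ (EC N →ₗ[ℚ] EC N →ₗ[ℚ] E3 N)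
    (Finsupp.lsum ℚ fun u₂ => LinearMap.toSpanSingleton ℚ (EC N →ₗ[ℚ] E3 N)
      (Finsupp.lsum ℚ fun u₃ => LinearMap.toSpanSingleton ℚ (E3 N) (e3 (u₁, u₂, u₃))))

lemma t3_eq (x y z : EC N) : t3 x y z = t3L x y z := by
  simp only [t3, t3L, Finsupp.lsum_apply, Finsupp.sum, LinearMap.sum_apply,
    LinearMap.smul_apply, LinearMap.toSpanSingleton_apply, Finset.smul_sum,
    smul_smul, e3, Finsupp.smul_single, smul_eq_mul, mul_one]

noncomputable def mu3L : E3 N →ₗ[ℚ] E3 N →ₗ[ℚ] E3 N :=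
  Finsupp.lsum ℚ fun u => LinearMap.toSpanSingleton ℚ (E3 N →ₗ[ℚ] E3 N)
    (Finsupp.lsum ℚ fun v => LinearMap.toSpanSingleton ℚ (E3 N) (mu3B u v))

lemma mu3_eq (x y : E3 N) : mu3 x y = mu3L x y := by
  rw [mu3, mu3L, Finsupp.lsum_apply, Finsupp.sum, Finsupp.sum, LinearMap.sum_apply]
  refine Finset.sum_congr rfl fun u _ => ?_
  rw [LinearMap.toSpanSingleton_apply, LinearMap.smul_apply, Finsupp.lsum_apply,
    Finsupp.smul_sum]
  exact Finsupp.sum_congr fun v _ => by simp [smul_smul]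

noncomputable def bd3L : E3 N →ₗ[ℚ] E3 N :=
  Finsupp.lsum ℚ fun u => LinearMap.toSpanSingleton ℚ (E3 N) (bd3B u)

lemma bd3_eq (x : E3 N) : bd3 x = bd3L x := by
  rw [bd3, bd3L, Finsupp.lsum_apply]
  exact Finsupp.sum_congr fun u _ => by simp

noncomputable def sgn (n : ℕ) : EC N →ₗ[ℚ] EC N :=
  Finsupp.lsum ℚ fun w => LinearMap.toSpanSingleton ℚ (EC N)
    (((-1 : ℚ) ^ (w.cod * n)) • B.e w)

-- single evaluation lemmas
lemma bdL_single (u : B N) (c : ℚ) : bdL (Finsupp.single u c) = c • B.bdB u := by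
  simp [bdL]

lemma muL_single_single (u v : B N) (c d : ℚ) :
    muL (Finsupp.single u c) (Finsupp.single v d) = (c * d) • B.muB u v := by
  simp [muL, smul_smul]

lemma t3L_single (u₁ u₂ u₃ : B N) (c d e : ℚ) :
    t3L (Finsupp.single u₁ c) (Finsupp.single u₂ d) (Finsupp.single u₃ e)
      = (c * d * e) • e3 (u₁, u₂, u₃) := by
  simp [t3L, smul_smul, mul_assoc]

lemma mu3L_single_single (u v : B3 N) (c d : ℚ) :
    mu3L (Finsupp.single u c) (Finsupp.single v d) = (c * d) • mu3B u v := by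
  simp [mu3L, smul_smul]

lemma bd3L_single (u : B3 N) (c : ℚ) : bd3L (Finsupp.single u c) = c • bd3B u := by
  simp [bd3L]

lemma sgn_single (n : ℕ) (w : B N) (c : ℚ) :
    sgn n (Finsupp.single w c) = (c * (-1 : ℚ) ^ (w.cod * n)) • B.e w := by
  simp [sgn, smul_smul]


lemma single_eq (w : B N) (r : ℚ) : Finsupp.single w r = r • B.e w := by
  simp [B.e, Finsupp.smul_single]

lemma bdL_e (u : B N) : bdL (B.e u) = B.bdB u := by
  simp [B.e, bdL_single]

lemma sgn_e (n : ℕ) (w : B N) :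
    sgn n (B.e w) = ((-1 : ℚ) ^ (w.cod * n)) • B.e w := by
  simp [B.e, sgn_single]

lemma muL_e_e (u v : B N) : muL (B.e u) (B.e v) = B.muB u v := by
  simp [B.e, muL_single_single]

lemma mu3L_e3_e3 (u v : B3 N) : mu3L (e3 u) (e3 v) = mu3B u v := by
  simp [e3, mu3L_single_single]

lemma bd3L_e3 (u : B3 N) : bd3L (e3 u) = bd3B u := by
  simp [e3, bd3L_single]

lemma hom_e (u : B N) : ∀ w ∈ (B.e u).support, w.cod = u.cod := by
  intro w hw
  have := Finsupp.support_single_subset hw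
  simp only [Finset.mem_singleton] at this
  subst this; rfl

lemma hom_bdB (u : B N) : ∀ w ∈ (B.bdB u).support, w.cod = u.cod + 1 := by
  intro w hw
  rw [Finsupp.mem_support_iff] at hw
  cases u <;> cases w <;>
    simp_all [B.bdB, B.cod, Finsupp.single_apply, Finsupp.sub_apply]

lemma hom_muB (u v : B N) : ∀ w ∈ (B.muB u v).support, w.cod = u.cod + v.cod := by
  intro w hw
  rw [Finsupp.mem_support_iff] at hw
  cases u <;> cases v <;> dsimp only [B.muB] at hw <;> (try split_ifs at hw) <;>
    cases w <;>
    simp_all [B.cod, Finsupp.single_apply, Finsupp.add_apply]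

lemma sgn_hom {p : ℕ} (n : ℕ) (x : EC N) (hx : ∀ w ∈ x.support, w.cod = p) :
    sgn n x = ((-1 : ℚ) ^ (p * n)) • x := by
  rw [sgn, Finsupp.lsum_apply]
  conv_rhs => rw [← Finsupp.sum_single x, Finsupp.smul_sum]
  refine Finsupp.sum_congr fun w hw => ?_
  rw [hx w hw]
  simp [B.e, smul_smul, mul_comm]

lemma K1 (x y z : EC N) :
    bd3L (t3L x y z)
      = t3L (bdL x) y z + t3L (sgn 1 x) (bdL y) z + t3L (sgn 1 x) (sgn 1 y) (bdL z) := by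
  induction x using Finsupp.induction_linear with
  | zero => simp
  | add f g hf hg => simp only [map_add, LinearMap.add_apply] at *; rw [hf, hg]; abel
  | single a c =>
    induction y using Finsupp.induction_linear with
    | zero => simp
    | add f g hf hg => simp only [map_add, LinearMap.add_apply] at *; rw [hf, hg]; abel
    | single b d =>
      induction z using Finsupp.induction_linear with
      | zero => simp
      | add f g hf hg => simp only [map_add, LinearMap.add_apply] at *; rw [hf, hg]; abel
      | single g e =>
        rw [t3L_single, map_smul, bd3L_e3, bd3B]
        dsimp only
        simp only [t3_eq, single_eq, map_smul, LinearMap.smul_apply, bdL_e, sgn_e]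
        module


lemma K2 (v : B3 N) (x y z : EC N) :
    mu3L (t3L x y z) (e3 v)
      = t3L (muL x (B.e v.1)) (muL (sgn v.1.cod y) (B.e v.2.1))
          (muL (sgn (v.1.cod + v.2.1.cod) z) (B.e v.2.2)) := by
  induction x using Finsupp.induction_linear with
  | zero => simp
  | add f g hf hg => simp only [map_add, LinearMap.add_apply] at *; rw [hf, hg]
  | single a c =>
    induction y using Finsupp.induction_linear with
    | zero => simp
    | add f g hf hg => simp only [map_add, LinearMap.add_apply] at *; rw [hf, hg]
    | single b d =>
      induction z using Finsupp.induction_linear with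
      | zero => simp
      | add f g hf hg => simp only [map_add, LinearMap.add_apply] at *; rw [hf, hg]
      | single g e =>
        rw [t3L_single, map_smul, LinearMap.smul_apply, mu3L_e3_e3, mu3B]
        dsimp only
        simp only [t3_eq, single_eq, map_smul, LinearMap.smul_apply, sgn_e, muL_e_e]
        module

lemma K3 (u : B3 N) (x y z : EC N) :
    mu3L (e3 u) (t3L x y z)
      = t3L (muL (B.e u.1) (sgn (u.2.1.cod + u.2.2.cod) x))
          (muL (B.e u.2.1) (sgn u.2.2.cod y)) (muL (B.e u.2.2) z) := by
  induction x using Finsupp.induction_linear with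
  | zero => simp
  | add f g hf hg => simp only [map_add, LinearMap.add_apply] at *; rw [hf, hg]
  | single a c =>
    induction y using Finsupp.induction_linear with
    | zero => simp
    | add f g hf hg => simp only [map_add, LinearMap.add_apply] at *; rw [hf, hg]
    | single b d =>
      induction z using Finsupp.induction_linear with
      | zero => simp
      | add f g hf hg => simp only [map_add, LinearMap.add_apply] at *; rw [hf, hg]
      | single g e =>
        rw [t3L_single, map_smul, mu3L_e3_e3, mu3B]
        dsimp only
        simp only [t3_eq, single_eq, map_smul, LinearMap.smul_apply, sgn_e, muL_e_e]
        module


lemma L1 (h1 : (1 : ZMod N) ≠ 0) (h2 : (2 : ZMod N) ≠ 0) (u v : B N)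
    (hu : isI u = false) (hv : isI v = false) :
    bdL (B.muB u v)
      = muL (B.bdB u) (B.e v) + ((-1 : ℚ) ^ u.cod) • muL (B.e u) (B.bdB v) := by
  cases u with
  | I a => simp [isI] at hu
  | P a =>
    cases v with
    | I b => simp [isI] at hv
    | P b =>
      simp [B.muB, B.bdB, B.cod]
    | S b =>
      dsimp only [B.muB, B.bdB, B.cod]
      split_ifs <;>
        simp [bdL_single, bdL_e, B.bdB, map_sub, single_eq, muL_e_e, B.muB]
  | S a =>
    cases v with
    | I b => simp [isI] at hv
    | P b =>
      dsimp only [B.muB, B.bdB, B.cod]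
      split_ifs <;>
        simp [bdL_single, bdL_e, B.bdB, map_sub, LinearMap.sub_apply, single_eq, map_smul,
          LinearMap.smul_apply, muL_e_e, B.muB]
    | S b =>
      dsimp only [B.muB, B.bdB, B.cod]
      rcases eq_or_ne b a with rfl | hba
      · rw [if_pos rfl]
        simp only [map_add, single_eq, map_smul, map_sub, LinearMap.sub_apply,
          LinearMap.smul_apply, bdL_e, muL_e_e, B.bdB, B.muB,
          add_sub_cancel_right, or_true, true_or, if_true]
        module
      · rw [if_neg hba]
        rcases eq_or_ne b (a + 1) with rfl | hb1
        · have f1 : ¬ (a + 1 = a) := fun h => h1 (by linear_combination h)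
          have f2 : ¬ (a + 1 = a - 1) := fun h => h2 (by linear_combination h)
          have f3 : ¬ (a = a + 1 + 1) := fun h => h2 (by linear_combination -h)
          have f4 : ¬ (a = a + 1) := fun h => h1 (by linear_combination -h)
          rw [if_pos rfl]
          simp only [single_eq, map_smul, map_sub, LinearMap.sub_apply,
            LinearMap.smul_apply, bdL_e, muL_e_e, B.bdB, B.muB, add_sub_cancel_right,
            f1, f2, f3, f4, or_true, true_or, or_false, false_or, if_true, if_false,
            or_self]
          module
        · rw [if_neg hb1]
          rcases eq_or_ne b (a - 1) with rfl | hb2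
          · have g1 : ¬ (a - 1 = a + 1) := fun h => h2 (by linear_combination -h)
            have g2 : ¬ (a - 1 = a) := fun h => h1 (by linear_combination -h)
            have g3 : ¬ (a = a - 1) := fun h => h1 (by linear_combination h)
            have g4 : ¬ (a = a - 1 - 1) := fun h => h2 (by linear_combination h)
            rw [if_pos rfl]
            simp only [single_eq, map_smul, map_sub, LinearMap.sub_apply,
              LinearMap.smul_apply, bdL_e, muL_e_e, B.bdB, B.muB, sub_add_cancel_right,
              sub_add_cancel, add_sub_cancel_right, g1, g2, g3, g4, or_true, true_or,
              or_false, false_or, if_true, if_false, or_self]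
            module
          · rw [if_neg hb2]
            have k1 : ¬ (a = b + 1) := fun h => hb2 (by linear_combination -h)
            have k2 : ¬ (a = b) := fun h => hba h.symm
            have k3 : ¬ (a = b - 1) := fun h => hb1 (by linear_combination -h)
            simp only [map_zero, single_eq, map_smul, map_sub, LinearMap.sub_apply,
              LinearMap.smul_apply, bdL_e, muL_e_e, B.bdB, B.muB, add_sub_cancel_right,
              hba, hb1, hb2, k1, k2, k3, or_self, false_or, or_false, if_false]
            simp

end LeibnizAux

set_option maxHeartbeats 4000000 in
open LeibnizAux in
theorem leibniz_on_C3_aux (N : ℕ) (hN : 3 ≤ N) :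
    ∀ u v : B3 N, noInf u → noInf v →
      bd3 (mu3 (e3 u) (e3 v))
        = mu3 (bd3 (e3 u)) (e3 v) + ((-1 : ℚ) ^ cod3 u) • mu3 (e3 u) (bd3 (e3 v)) := by
  have hNZ : NeZero N := ⟨by omega⟩
  have h1 : (1 : ZMod N) ≠ 0 := by
    intro h
    have : (N : ℕ) ∣ 1 := by
      have := (ZMod.natCast_eq_zero_iff 1 N).mp (by exact_mod_cast h)
      exact this
    exact absurd (Nat.le_of_dvd one_pos this) (by omega)
  have h2 : (2 : ZMod N) ≠ 0 := by
    intro h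
    have : (N : ℕ) ∣ 2 := by
      have := (ZMod.natCast_eq_zero_iff 2 N).mp (by exact_mod_cast h)
      exact this
    exact absurd (Nat.le_of_dvd two_pos this) (by omega)
  rintro ⟨u₁, u₂, u₃⟩ ⟨v₁, v₂, v₃⟩ hu hv
  have hu123 : isI u₁ = false ∧ isI u₂ = false ∧ isI u₃ = false := by
    simp only [noInf, nI] at hu; split_ifs at hu <;> simp_all
  have hv123 : isI v₁ = false ∧ isI v₂ = false ∧ isI v₃ = false := by
    simp only [noInf, nI] at hv; split_ifs at hv <;> simp_all
  obtain ⟨hu1, hu2, hu3⟩ := hu123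
  obtain ⟨hv1, hv2, hv3⟩ := hv123
  simp only [bd3_eq, mu3_eq]
  rw [mu3L_e3_e3, bd3L_e3, bd3L_e3, mu3B, bd3B, bd3B]
  dsimp only
  simp only [t3_eq]
  rw [map_smul, K1]
  rw [sgn_hom 1 _ (hom_muB u₁ v₁), sgn_hom 1 _ (hom_muB u₂ v₂)]
  rw [L1 h1 h2 u₁ v₁ hu1 hv1, L1 h1 h2 u₂ v₂ hu2 hv2, L1 h1 h2 u₃ v₃ hu3 hv3]
  simp only [map_add, map_smul, LinearMap.add_apply, LinearMap.smul_apply]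
  rw [K2, K2, K2, K3, K3, K3]
  dsimp only
  rw [sgn_hom v₁.cod _ (hom_e u₂), sgn_hom (v₁.cod + v₂.cod) _ (hom_e u₃),
    sgn_hom v₁.cod _ (hom_bdB u₂), sgn_hom (v₁.cod + v₂.cod) _ (hom_bdB u₃),
    sgn_hom (u₂.cod + u₃.cod) _ (hom_bdB v₁), sgn_hom u₃.cod _ (hom_e v₂),
    sgn_hom (u₂.cod + u₃.cod) _ (hom_e v₁), sgn_hom u₃.cod _ (hom_bdB v₂)]
  simp only [map_smul, LinearMap.smul_apply, muL_e_e, cod3]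
  have hc : ∀ w : B N, w.cod = 0 ∨ w.cod = 1 := fun w => by cases w <;> simp [B.cod]
  rcases hc u₁ with h1c | h1c <;> simp only [h1c] <;>
    rcases hc u₂ with h2c | h2c <;> simp only [h2c] <;>
      rcases hc u₃ with h3c | h3c <;> simp only [h3c] <;>
        rcases hc v₁ with h4c | h4c <;> simp only [h4c] <;>
          rcases hc v₂ with h5c | h5c <;> simp only [h5c] <;>
            module

/-- on the cubical subcomplex `C3_N` (basis triples with no infinitesimal
component) the boundary satisfies the Leibniz product rule. -/
theorem leibniz_on_C3 (N : ℕ) (hN : 3 ≤ N) :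
    ∀ u v : B3 N, noInf u → noInf v →
      bd3 (mu3 (e3 u) (e3 v))
        = mu3 (bd3 (e3 u)) (e3 v) + ((-1 : ℚ) ^ cod3 u) • mu3 (e3 u) (bd3 (e3 v)) := leibniz_on_C3_aux N hN
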